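/- Let G be a nondegenerate distribution function. Then the following are equivalent: (i) G is freely max-stable; (ii) there exists a distribution function F that lies in the free max-domain of attraction of G; (iii) G lies in the free max-domain of attraction of G. -/

import Mathlib

open Filter Topology

def IsDistFun (F : ℝ → ℝ) : Prop :=
  Monotone F ∧ (∀ x, ContinuousWithinAt F (Set.Ici x) x) ∧
    Tendsto F atBot (𝓝 0) ∧ Tendsto F atTop (𝓝 1)

noncomputable def freePow (F : ℝ → ℝ) (n : ℕ) (x : ℝ) : ℝ :=
  max ((n : ℝ) * F x - ((n : ℝ) - 1)) 0

def FreelyMaxStable (F : ℝ → ℝ) : Prop :=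
  ∀ n : ℕ, 1 ≤ n → ∃ a b : ℝ, 0 < a ∧ ∀ x : ℝ, freePow F n (a * x + b) = F x

def FreeDomAttr (F G : ℝ → ℝ) : Prop :=
  ∃ a b : ℕ → ℝ, (∀ n, 0 < a n) ∧
    ∀ x : ℝ, ContinuousAt G x →
      Tendsto (fun n => freePow F n (a n * x + b n)) atTop (𝓝 (G x))

lemma distFun_nonneg {G : ℝ → ℝ} (hG : IsDistFun G) (x : ℝ) : 0 ≤ G x := by
  refine le_of_tendsto hG.2.2.1 ?_
  filter_upwards [eventually_le_atBot x] with y hy using hG.1 hy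

lemma distFun_le_one {G : ℝ → ℝ} (hG : IsDistFun G) (x : ℝ) : G x ≤ 1 := by
  refine ge_of_tendsto hG.2.2.2 ?_
  filter_upwards [eventually_ge_atTop x] with y hy using hG.1 hy

lemma exists_contAt_Ioo {G : ℝ → ℝ} (hm : Monotone G) {u v : ℝ} (h : u < v) :
    ∃ x, x ∈ Set.Ioo u v ∧ ContinuousAt G x := by
  have hc : Dense {x | ¬ContinuousAt G x}ᶜ :=
    (hm.countable_not_continuousAt).dense_compl ℝ
  obtain ⟨x, hx1, hx2⟩ := hc.exists_mem_open isOpen_Ioo (Set.nonempty_Ioo.2 h)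
  exact ⟨x, hx2, not_not.mp hx1⟩

lemma exists_contAt_lt {G : ℝ → ℝ} (hG : IsDistFun G) {ε : ℝ} (hε : 0 < ε) :
    ∃ x, ContinuousAt G x ∧ G x < ε := by
  obtain ⟨y, hy⟩ := (hG.2.2.1.eventually (eventually_lt_nhds hε)).exists
  obtain ⟨x, hx, hcx⟩ := exists_contAt_Ioo hG.1 (sub_one_lt y)
  exact ⟨x, hcx, lt_of_le_of_lt (hG.1 hx.2.le) hy⟩

lemma exists_contAt_gt {G : ℝ → ℝ} (hG : IsDistFun G) {q : ℝ} (hq : q < 1) :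
    ∃ x, ContinuousAt G x ∧ q < G x := by
  obtain ⟨y, hy⟩ := (hG.2.2.2.eventually (eventually_gt_nhds hq)).exists
  obtain ⟨x, hx, hcx⟩ := exists_contAt_Ioo hG.1 (lt_add_one y)
  exact ⟨x, hcx, lt_of_lt_of_le hy (hG.1 hx.1.le)⟩

lemma ev_lt_of_tendsto {U : ℕ → ℝ → ℝ} (hU : ∀ n, Monotone (U n)) {s t : ℕ → ℝ} {α β : ℝ}
    (hs : Tendsto (fun n => U n (s n)) atTop (𝓝 α))
    (ht : Tendsto (fun n => U n (t n)) atTop (𝓝 β)) (hαβ : α < β) :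
    ∀ᶠ n in atTop, s n < t n := by
  obtain ⟨γ, h1, h2⟩ := exists_between hαβ
  filter_upwards [hs.eventually (eventually_lt_nhds h1), ht.eventually (eventually_gt_nhds h2)]
    with n h1 h2
  by_contra h
  exact absurd (hU n (not_lt.mp h)) (not_le.mpr (h1.trans h2))

set_option maxHeartbeats 1000000 in
lemma typesLemma {G V : ℝ → ℝ} {U : ℕ → ℝ → ℝ} {c d : ℕ → ℝ}
    (hG : IsDistFun G) (hGnd : ∃ r, 0 < G r ∧ G r < 1)
    (hU : ∀ n, Monotone (U n)) (hc : ∀ n, 0 < c n)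
    (hUG : ∀ x, ContinuousAt G x → Tendsto (fun n => U n x) atTop (𝓝 (G x)))
    (hUV : ∀ x, ContinuousAt G x → Tendsto (fun n => U n (c n * x + d n)) atTop (𝓝 (V x)))
    (hVmono : Monotone V) (hVrc : ∀ x, ContinuousWithinAt V (Set.Ici x) x)
    (hV0 : Tendsto V atBot (𝓝 0)) (hV1 : Tendsto V atTop (𝓝 1))
    (hVnd : ∃ w, 0 < V w ∧ V w < 1) :
    ∃ A B : ℝ, 0 < A ∧ ∀ x, V x = G (A * x + B) := by
  classical
  -- pick continuity points z₁ < z₂ with 0 < V z₁, V z₂ < 1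
  obtain ⟨w, hw0, hw1⟩ := hVnd
  obtain ⟨u, hu, hub⟩ := mem_nhdsGE_iff_exists_Ico_subset.mp
    ((hVrc w).eventually (eventually_lt_nhds hw1))
  obtain ⟨z₁, hz₁, hcz₁⟩ := exists_contAt_Ioo hG.1 hu
  obtain ⟨z₂, hz₂, hcz₂⟩ := exists_contAt_Ioo hG.1 hz₁.2
  have hz12 : z₁ < z₂ := hz₂.1
  have hVz₁ : 0 < V z₁ := hw0.trans_le (hVmono hz₁.1.le)
  have hVz₂ : V z₂ < 1 := hub ⟨(hz₁.1.trans hz₂.1).le, hz₂.2⟩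
  -- bracket points
  obtain ⟨y₁, hcy₁, hy₁⟩ := exists_contAt_lt hG hVz₁
  obtain ⟨y₂, hcy₂, hy₂⟩ := exists_contAt_gt hG hVz₂
  have ev1 : ∀ᶠ n in atTop, y₁ < c n * z₁ + d n :=
    ev_lt_of_tendsto hU (s := fun _ => y₁) (hUG y₁ hcy₁) (hUV z₁ hcz₁) hy₁
  have ev2 : ∀ᶠ n in atTop, c n * z₂ + d n < y₂ :=
    ev_lt_of_tendsto hU (t := fun _ => y₂) (hUV z₂ hcz₂) (hUG y₂ hcy₂) hy₂
  have hy12 : y₁ < y₂ := by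
    have h1 := ev1.and ev2
    obtain ⟨n, hn1, hn2⟩ := h1.exists
    have : c n * z₁ + d n ≤ c n * z₂ + d n := by nlinarith [hc n, hz12]
    linarith
  set K : ℝ := (y₂ - y₁) / (z₂ - z₁) with hK
  have hKpos : 0 < K := div_pos (by linarith) (by linarith)
  set L : ℝ := y₁ - K * |z₁| with hL
  set M : ℝ := y₂ + K * |z₁| with hM
  have hbox : ∀ᶠ n in atTop,
      (c n, d n) ∈ (Set.Icc (0:ℝ) K) ×ˢ (Set.Icc L M) := by
    filter_upwards [ev1, ev2] with n h1 h2
    have hcn := hc n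
    have hcK : c n ≤ K := by
      rw [hK, le_div_iff₀ (by linarith)]
      nlinarith
    have habs1 : c n * z₁ ≤ K * |z₁| := by
      calc c n * z₁ ≤ c n * |z₁| := by nlinarith [le_abs_self z₁, abs_nonneg z₁]
        _ ≤ K * |z₁| := by nlinarith [abs_nonneg z₁]
    have habs2 : -(K * |z₁|) ≤ c n * z₁ := by
      have : -(c n * z₁) ≤ c n * |z₁| := by nlinarith [neg_abs_le z₁, abs_nonneg z₁]
      nlinarith [abs_nonneg z₁]
    refine ⟨⟨hcn.le, hcK⟩, ?_, ?_⟩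
    · rw [hL]; nlinarith
    · rw [hM]
      have : c n * z₁ + d n < y₂ := by nlinarith
      nlinarith
  obtain ⟨N, hN⟩ := eventually_atTop.mp hbox
  obtain ⟨p, hp, φ, hφ, hφt⟩ := (isCompact_Icc.prod isCompact_Icc).tendsto_subseq
    (x := fun n => (c (n + N), d (n + N))) (fun n => hN (n + N) (Nat.le_add_left N n))
  set ψ : ℕ → ℕ := fun n => φ n + N with hψdef
  have hψ : Tendsto ψ atTop atTop :=
    tendsto_atTop_mono (fun n => Nat.le_add_right (φ n) N) hφ.tendsto_atTop
  obtain ⟨A, B⟩ := p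
  have hcA : Tendsto (fun n => c (ψ n)) atTop (𝓝 A) := (continuous_fst.tendsto _).comp hφt
  have hdB : Tendsto (fun n => d (ψ n)) atTop (𝓝 B) := (continuous_snd.tendsto _).comp hφt
  have hA0 : 0 ≤ A := hp.1.1
  have hlim : ∀ x : ℝ, Tendsto (fun n => c (ψ n) * x + d (ψ n)) atTop (𝓝 (A * x + B)) :=
    fun x => (hcA.mul_const x).add hdB
  have key1 : ∀ x r, ContinuousAt G x → ContinuousAt G r → V x < G r → A * x + B ≤ r := by
    intro x r hcx hcr hlt
    have ev : ∀ᶠ n in atTop, c n * x + d n < r :=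
      ev_lt_of_tendsto hU (t := fun _ => r) (hUV x hcx) (hUG r hcr) hlt
    exact le_of_tendsto (hlim x) ((hψ.eventually ev).mono fun n hn => hn.le)
  have key2 : ∀ x r, ContinuousAt G x → ContinuousAt G r → G r < V x → r ≤ A * x + B := by
    intro x r hcx hcr hlt
    have ev : ∀ᶠ n in atTop, r < c n * x + d n :=
      ev_lt_of_tendsto hU (s := fun _ => r) (hUG r hcr) (hUV x hcx) hlt
    exact ge_of_tendsto (hlim x) ((hψ.eventually ev).mono fun n hn => hn.le)
  -- A > 0
  have hA : 0 < A := by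
    rcases hA0.lt_or_eq with h | h
    · exact h
    · exfalso
      obtain ⟨r, hr0, hr1⟩ := hGnd
      obtain ⟨u', hu', hub'⟩ := mem_nhdsGE_iff_exists_Ico_subset.mp
        ((hG.2.1 r).eventually (eventually_lt_nhds hr1))
      obtain ⟨r₁, hr₁, hcr₁⟩ := exists_contAt_Ioo hG.1 hu'
      obtain ⟨r₂, hr₂, hcr₂⟩ := exists_contAt_Ioo hG.1 hr₁.2
      have hr12 : r₁ < r₂ := hr₂.1
      have hGr₁ : 0 < G r₁ := hr0.trans_le (hG.1 hr₁.1.le)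
      have hGr₂ : G r₂ < 1 := hub' ⟨(hr₁.1.trans hr₂.1).le, hr₂.2⟩
      obtain ⟨y, hy⟩ := (hV0.eventually (eventually_lt_nhds hGr₁)).exists
      obtain ⟨x₁, hx₁, hcx₁⟩ := exists_contAt_Ioo hG.1 (sub_one_lt y)
      have hVx₁ : V x₁ < G r₁ := (hVmono hx₁.2.le).trans_lt hy
      obtain ⟨y', hy'⟩ := (hV1.eventually (eventually_gt_nhds hGr₂)).exists
      obtain ⟨x₂, hx₂, hcx₂⟩ := exists_contAt_Ioo hG.1 (lt_add_one y')
      have hVx₂ : G r₂ < V x₂ := hy'.trans_le (hVmono hx₂.1.le)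
      have h1 := key1 x₁ r₁ hcx₁ hcr₁ hVx₁
      have h2 := key2 x₂ r₂ hcx₂ hcr₂ hVx₂
      rw [← h] at h1 h2
      simp at h1 h2
      linarith
  -- dense equality
  have main : ∀ x, ContinuousAt G x → ContinuousAt G (A * x + B) → V x = G (A * x + B) := by
    intro x hcx hcy
    have hle : ∀ s, ContinuousAt G s → s < A * x + B → G s ≤ V x := by
      intro s hcs hs
      have ev : ∀ᶠ n in atTop, s < c (ψ n) * x + d (ψ n) :=
        (hlim x).eventually (eventually_gt_nhds hs)
      refine le_of_tendsto_of_tendsto ((hUG s hcs).comp hψ) ((hUV x hcx).comp hψ) ?_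
      filter_upwards [ev] with n hn
      exact hU (ψ n) hn.le
    have hge : ∀ t, ContinuousAt G t → A * x + B < t → V x ≤ G t := by
      intro t hct ht
      have ev : ∀ᶠ n in atTop, c (ψ n) * x + d (ψ n) < t :=
        (hlim x).eventually (eventually_lt_nhds ht)
      refine le_of_tendsto_of_tendsto ((hUV x hcx).comp hψ) ((hUG t hct).comp hψ) ?_
      filter_upwards [ev] with n hn
      exact hU (ψ n) hn.le
    refine le_antisymm ?_ ?_
    · refine le_of_forall_pos_le_add (fun ε hε => ?_)
      have ev : ∀ᶠ y in 𝓝 (A * x + B), G y < G (A * x + B) + ε :=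
        hcy.eventually (eventually_lt_nhds (lt_add_of_pos_right _ hε))
      obtain ⟨u', hu', hub'⟩ := mem_nhdsGT_iff_exists_Ioo_subset.mp
        (ev.filter_mono nhdsWithin_le_nhds)
      obtain ⟨t, ht, hct⟩ := exists_contAt_Ioo hG.1 hu'
      exact (hge t hct ht.1).trans (hub' ht).le
    · refine le_of_forall_pos_le_add (fun ε hε => ?_)
      have ev : ∀ᶠ y in 𝓝 (A * x + B), G (A * x + B) - ε < G y :=
        hcy.eventually (eventually_gt_nhds (sub_lt_self _ hε))
      obtain ⟨l, hl, hlb⟩ := mem_nhdsLT_iff_exists_Ioo_subset.mp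
        (ev.filter_mono nhdsWithin_le_nhds)
      obtain ⟨s, hs, hcs⟩ := exists_contAt_Ioo hG.1 hl
      have h1 := hle s hcs hs.2
      have h2 : G (A * x + B) - ε < G s := hlb hs
      linarith
  -- extend to all x by right continuity
  refine ⟨A, B, hA, fun x => ?_⟩
  set C : Set ℝ := {y | ¬ContinuousAt G y} ∪ (fun y => (y - B) / A) '' {y | ¬ContinuousAt G y}
    with hCdef
  have hCc : C.Countable :=
    (hG.1.countable_not_continuousAt).union ((hG.1.countable_not_continuousAt).image _)
  have hCd : Dense Cᶜ := hCc.dense_compl ℝ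
  have hseq : ∀ m : ℕ, ∃ t, t ∈ Cᶜ ∧ t ∈ Set.Ioo x (x + 1 / (m + 1)) := by
    intro m
    have hpos : (0:ℝ) < 1 / (m + 1) := by positivity
    obtain ⟨t, h1, h2⟩ := hCd.exists_mem_open isOpen_Ioo (Set.nonempty_Ioo.2 (lt_add_of_pos_right x hpos))
    exact ⟨t, h1, h2⟩
  choose tseq ht1 ht2 using hseq
  have htt : Tendsto tseq atTop (𝓝 x) := by
    have h2 : Tendsto (fun m : ℕ => x + 1 / ((m:ℝ) + 1)) atTop (𝓝 (x + 0)) :=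
      tendsto_const_nhds.add tendsto_one_div_add_atTop_nhds_zero_nat
    rw [add_zero] at h2
    exact tendsto_of_tendsto_of_tendsto_of_le_of_le tendsto_const_nhds h2
      (fun m => (ht2 m).1.le) (fun m => (ht2 m).2.le)
  have htt' : Tendsto tseq atTop (𝓝[Set.Ici x] x) :=
    tendsto_nhdsWithin_of_tendsto_nhds_of_eventually_within _ htt
      (Filter.Eventually.of_forall fun m => (ht2 m).1.le)
  have hVt : Tendsto (fun m => V (tseq m)) atTop (𝓝 (V x)) := (hVrc x).tendsto.comp htt'
  have hGt : Tendsto (fun m => G (A * tseq m + B)) atTop (𝓝 (G (A * x + B))) := by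
    refine (hG.2.1 (A * x + B)).tendsto.comp ?_
    refine tendsto_nhdsWithin_of_tendsto_nhds_of_eventually_within _
      ((htt.const_mul A).add_const B) (Filter.Eventually.of_forall fun m => ?_)
    have := (ht2 m).1.le
    simp only [Set.mem_Ici]
    nlinarith
  have heq : ∀ m, V (tseq m) = G (A * tseq m + B) := by
    intro m
    have hmem := ht1 m
    simp only [hCdef, Set.compl_union, Set.mem_inter_iff, Set.mem_compl_iff,
      Set.mem_setOf_eq, Set.mem_image, not_exists, not_and] at hmem
    have h1 : ContinuousAt G (tseq m) := not_not.mp hmem.1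
    have h2 : ContinuousAt G (A * tseq m + B) := by
      by_contra hcon
      exact hmem.2 (A * tseq m + B) hcon (by field_simp; ring)
    exact main (tseq m) h1 h2
  exact tendsto_nhds_unique (hVt.congr heq) hGt

set_option maxHeartbeats 1000000 in
lemma keyLemma {F G : ℝ → ℝ} {a b : ℕ → ℝ} {lam : ℝ}
    (hF : IsDistFun F) (hG : IsDistFun G) (hGnd : ∃ r, 0 < G r ∧ G r < 1)
    (ha : ∀ n, 0 < a n)
    (hconv : ∀ x, ContinuousAt G x →
      Tendsto (fun n => freePow F n (a n * x + b n)) atTop (𝓝 (G x)))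
    (hlam : 1 < lam) (hw : ∃ w, 1 - 1 / lam < G w ∧ G w < 1) :
    ∃ A B : ℝ, 0 < A ∧ ∀ x, max (1 - lam * (1 - G x)) 0 = G (A * x + B) := by
  classical
  have hlam0 : 0 < lam := by linarith
  set V : ℝ → ℝ := fun x => max (1 - lam * (1 - G x)) 0 with hVdef
  set m : ℕ → ℕ := fun n => ⌈lam * n⌉₊ with hmdef
  have hmlow : ∀ n : ℕ, lam * n ≤ (m n : ℝ) := fun n => Nat.le_ceil _
  have hmhigh : ∀ n : ℕ, (m n : ℝ) < lam * n + 1 := fun n =>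
    Nat.ceil_lt_add_one (by positivity)
  have hnm : ∀ n : ℕ, n ≤ m n := by
    intro n
    have h1 : (n : ℝ) ≤ lam * n := by nlinarith [Nat.cast_nonneg (α := ℝ) n]
    exact_mod_cast h1.trans (hmlow n)
  have hmt : Tendsto m atTop atTop := tendsto_atTop_mono hnm tendsto_id
  set U : ℕ → ℝ → ℝ := fun n y => freePow F (m n) (a (m n) * y + b (m n)) with hUdef
  set c : ℕ → ℝ := fun n => a n / a (m n) with hcdef
  set d : ℕ → ℝ := fun n => (b n - b (m n)) / a (m n) with hddef
  have hc : ∀ n, 0 < c n := fun n => div_pos (ha n) (ha (m n))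
  have hU : ∀ n, Monotone (U n) := by
    intro n y y' hyy
    have h1 : F (a (m n) * y + b (m n)) ≤ F (a (m n) * y' + b (m n)) :=
      hF.1 (by nlinarith [ha (m n)])
    exact max_le_max (by nlinarith [Nat.cast_nonneg (α := ℝ) (m n)]) le_rfl
  have hUG : ∀ x, ContinuousAt G x → Tendsto (fun n => U n x) atTop (𝓝 (G x)) :=
    fun x hcx => (hconv x hcx).comp hmt
  have harg : ∀ n (x : ℝ), a (m n) * (c n * x + d n) + b (m n) = a n * x + b n := by
    intro n x
    have := (ha (m n)).ne'
    simp only [hcdef, hddef]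
    field_simp
    ring
  clear_value V U c d
  have houter : Continuous (fun y : ℝ => max (1 - lam * (1 - y)) 0) :=
    (continuous_const.sub (continuous_const.mul (continuous_const.sub continuous_id))).max
      continuous_const
  have hUV : ∀ x, ContinuousAt G x →
      Tendsto (fun n => U n (c n * x + d n)) atTop (𝓝 (V x)) := by
    intro x hcx
    have hfun : (fun n => U n (c n * x + d n)) =
        fun n => freePow F (m n) (a n * x + b n) := by
      funext n
      simp only [hUdef]
      rw [harg n x]
    rw [hfun]
    simp only [hVdef]
    set e : ℕ → ℝ := fun n => F (a n * x + b n) with hedef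
    set t : ℕ → ℝ := fun n => (n : ℝ) * e n - ((n : ℝ) - 1) with htdef
    have hx : Tendsto (fun n => max (t n) 0) atTop (𝓝 (G x)) := hconv x hcx
    have he1 : ∀ n, e n ≤ 1 := fun n => distFun_le_one hF _
    clear_value e t
    rcases (distFun_nonneg hG x).eq_or_lt with hGx | hGx
    · -- G x = 0
      have hVx : (1 - lam * (1 - G x)) ⊔ 0 = 0 := by
        rw [← hGx]
        exact max_eq_right (by nlinarith)
      rw [hVx]
      have hev : ∀ᶠ n in atTop, max (t n) 0 < 1 - 1 / lam := by
        rw [← hGx] at hx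
        exact hx.eventually (eventually_lt_nhds (by
          have h9 : 1 / lam < 1 := by rw [div_lt_one hlam0]; linarith
          linarith))
      refine tendsto_const_nhds.congr' ?_
      filter_upwards [hev, eventually_ge_atTop 1] with n hn hn1
      have hn1' : (1 : ℝ) ≤ (n : ℝ) := by exact_mod_cast hn1
      have hn2 : max (t n) 0 < 1 - 1 / lam := hn
      have h1 : 1 / lam < 1 - t n := by
        have h8 := le_max_left (t n) 0
        linarith
      have h2 : (n : ℝ) * (1 - e n) = 1 - t n := by simp only [htdef]; ring
      have h3 : lam * ((n : ℝ) * (1 - e n)) ≤ (m n : ℝ) * (1 - e n) := by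
        have h4 : lam * (n : ℝ) ≤ (m n : ℝ) := hmlow n
        nlinarith [he1 n]
      have h5 : (1 : ℝ) < (m n : ℝ) * (1 - e n) := by
        have h6 : lam * (1 / lam) = 1 := by field_simp
        nlinarith
      symm
      have hee : F (a n * x + b n) = e n := by rw [hedef]
      simp only [freePow, hee]
      exact max_eq_right (by nlinarith)
    · -- 0 < G x
      have hev : ∀ᶠ n in atTop, 0 < max (t n) 0 :=
        hx.eventually (eventually_gt_nhds hGx)
      have ht : Tendsto t atTop (𝓝 (G x)) := by
        refine hx.congr' ?_
        filter_upwards [hev] with n hn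
        rcases le_or_gt (t n) 0 with h | h
        · rw [max_eq_right h] at hn; linarith
        · rw [max_eq_left h.le]
      have hr : Tendsto (fun n => (m n : ℝ) / n) atTop (𝓝 lam) := by
        have hup : Tendsto (fun n : ℕ => lam + 1 / (n : ℝ)) atTop (𝓝 (lam + 0)) :=
          tendsto_const_nhds.add tendsto_one_div_atTop_nhds_zero_nat
        rw [add_zero] at hup
        refine tendsto_of_tendsto_of_tendsto_of_le_of_le' tendsto_const_nhds hup ?_ ?_
        · filter_upwards [eventually_gt_atTop 0] with n hn
          have hn' : (0 : ℝ) < (n : ℝ) := by exact_mod_cast hn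
          rw [le_div_iff₀ hn']
          exact hmlow n
        · filter_upwards [eventually_gt_atTop 0] with n hn
          have hn' : (0 : ℝ) < (n : ℝ) := by exact_mod_cast hn
          rw [div_le_iff₀ hn']
          have := hmhigh n
          have h7 : (lam + 1 / (n : ℝ)) * (n : ℝ) = lam * n + 1 := by field_simp
          linarith [h7 ▸ this.le]
      have h2 : Tendsto (fun n => (m n : ℝ) * (1 - e n)) atTop (𝓝 (lam * (1 - G x))) := by
        have hprod : Tendsto (fun n => ((m n : ℝ) / n) * ((n : ℝ) * (1 - e n))) atTop
            (𝓝 (lam * (1 - G x))) := by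
          refine hr.mul ?_
          have : Tendsto (fun n => 1 - t n) atTop (𝓝 (1 - G x)) :=
            tendsto_const_nhds.sub ht
          refine this.congr' ?_
          filter_upwards [] with n
          simp only [htdef]; ring
        refine hprod.congr' ?_
        filter_upwards [eventually_gt_atTop 0] with n hn
        have hn' : ((n : ℝ)) ≠ 0 := by positivity
        field_simp
      have hinner : Tendsto (fun n => 1 - (m n : ℝ) * (1 - e n)) atTop
          (𝓝 (1 - lam * (1 - G x))) := tendsto_const_nhds.sub h2
      have := hinner.max (tendsto_const_nhds (x := (0:ℝ)))
      refine this.congr ?_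
      intro n
      simp only [freePow, hedef]
      congr 1
      ring
  have hVmono : Monotone V := by
    intro x y hxy
    simp only [hVdef]
    exact max_le_max (by nlinarith [hG.1 hxy]) le_rfl
  have hVrc : ∀ x, ContinuousWithinAt V (Set.Ici x) x := by
    intro x
    rw [hVdef]
    exact houter.continuousAt.comp_continuousWithinAt (hG.2.1 x)
  have hV0 : Tendsto V atBot (𝓝 0) := by
    have h := (houter.tendsto 0).comp hG.2.2.1
    have h0 : ((1:ℝ) - lam) ⊔ 0 = 0 := max_eq_right (by linarith)
    simpa [hVdef, h0, Function.comp_def] using h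
  have hV1 : Tendsto V atTop (𝓝 1) := by
    have h := (houter.tendsto 1).comp hG.2.2.2
    simpa [hVdef, Function.comp_def] using h
  have hVnd : ∃ w, 0 < V w ∧ V w < 1 := by
    obtain ⟨w, hw1, hw2⟩ := hw
    have hpos : 0 < 1 - lam * (1 - G w) := by
      have h6 : lam * (1 / lam) = 1 := by field_simp
      nlinarith
    refine ⟨w, ?_, ?_⟩ <;> simp only [hVdef]
    · exact lt_of_lt_of_le hpos (le_max_left _ _)
    · apply max_lt ?_ one_pos
      nlinarith
  obtain ⟨A, B, hA, hVeq⟩ := typesLemma hG hGnd hU hc hUG hUV hVmono hVrc hV0 hV1 hVnd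
  refine ⟨A, B, hA, fun x => ?_⟩
  have h := hVeq x
  simp only [hVdef] at h
  exact h

lemma domAttr_to_maxStable {G : ℝ → ℝ} (hG : IsDistFun G) (hnd : ∃ x, 0 < G x ∧ G x < 1)
    (hex : ∃ F : ℝ → ℝ, IsDistFun F ∧ FreeDomAttr F G) : FreelyMaxStable G := by
  obtain ⟨F, hF, a, b, ha, hconv⟩ := hex
  have hS1 : ∀ q : ℝ, q < 1 → ∃ x, q < G x ∧ G x < 1 := by
    by_contra hcon
    push_neg at hcon
    obtain ⟨q, hq1, hq2⟩ := hcon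
    obtain ⟨r, hr0, hr1⟩ := hnd
    set S : Set ℝ := {y | y < 1 ∧ ∃ x, G x = y} with hSdef
    have hSne : G r ∈ S := ⟨hr1, r, rfl⟩
    have hSbdd : BddAbove S := by
      refine ⟨q, fun y hy => ?_⟩
      obtain ⟨hy1, x, rfl⟩ := hy
      by_contra hcon2
      exact absurd (hq2 x (not_le.mp hcon2)) (not_le.mpr hy1)
    set p := sSup S with hpdef
    have hpge : G r ≤ p := le_csSup hSbdd hSne
    have hp0 : 0 < p := lt_of_lt_of_le hr0 hpge
    have hple : p ≤ q := csSup_le ⟨_, hSne⟩ (fun y hy => by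
      obtain ⟨hy1, x, rfl⟩ := hy
      by_contra hcon2
      exact absurd (hq2 x (not_le.mp hcon2)) (not_le.mpr hy1))
    have hp1 : p < 1 := lt_of_le_of_lt hple hq1
    set lam : ℝ := (1 + 1 / (1 - p)) / 2 with hlamdef
    have hinv : 1 < 1 / (1 - p) := one_lt_one_div (by linarith) (by linarith)
    have hlam : 1 < lam := by rw [hlamdef]; linarith
    have hlam0 : 0 < lam := by linarith
    have hlamlt : lam < 1 / (1 - p) := by rw [hlamdef]; linarith
    have hkey : 1 - 1 / lam < p := by
      have h1 : (1 - p) * lam < 1 := by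
        have h2 : (1 - p) * (1 / (1 - p)) = 1 := by
          rw [mul_one_div, div_self (by linarith : (1:ℝ) - p ≠ 0)]
        nlinarith
      have h3 : 1 - p < 1 / lam := by rw [lt_div_iff₀ hlam0]; linarith
      linarith
    obtain ⟨y, hyS, hy⟩ := exists_lt_of_lt_csSup ⟨_, hSne⟩ hkey
    obtain ⟨hy1, w, rfl⟩ := hyS
    obtain ⟨A, B, hA, heq⟩ := keyLemma hF hG ⟨r, hr0, hr1⟩ ha hconv hlam ⟨w, hy, hy1⟩
    have hθp : max (1 - lam * (1 - p)) 0 < p := by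
      apply max_lt ?_ hp0
      nlinarith
    obtain ⟨y', hy'S, hy'⟩ := exists_lt_of_lt_csSup ⟨_, hSne⟩ hθp
    obtain ⟨hy'1, w', rfl⟩ := hy'S
    have hgw0 : 0 < G w' := lt_of_le_of_lt (le_max_right _ _) hy'
    have h7 : 1 - lam * (1 - p) < G w' := lt_of_le_of_lt (le_max_left _ _) hy'
    have hAx₀ : A * ((w' - B) / A) + B = w' := by field_simp; ring
    have h2 := heq ((w' - B) / A)
    rw [hAx₀] at h2
    have h6 : 1 - lam * (1 - G ((w' - B) / A)) = G w' := by
      rcases le_or_gt (1 - lam * (1 - G ((w' - B) / A))) 0 with h | h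
      · rw [max_eq_right h] at h2; linarith
      · rw [max_eq_left h.le] at h2; exact h2
    have h8 : p < G ((w' - B) / A) := by nlinarith
    have h9 : G ((w' - B) / A) < 1 := by
      rcases lt_or_ge (G ((w' - B) / A)) 1 with h | h
      · exact h
      · exfalso
        have h10 : G ((w' - B) / A) = 1 := le_antisymm (distFun_le_one hG _) h
        rw [h10] at h6
        norm_num at h6
        linarith
    have h11 : G ((w' - B) / A) ≤ p := le_csSup hSbdd ⟨h9, _, rfl⟩
    linarith
  intro k hk
  rcases eq_or_lt_of_le hk with hk1 | hk2
  · refine ⟨1, 0, one_pos, fun x => ?_⟩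
    have h0 : (1:ℝ) * x + 0 = x := by ring
    simp only [freePow, h0, ← hk1, Nat.cast_one]
    rw [one_mul, sub_self, sub_zero]
    exact max_eq_left (distFun_nonneg hG x)
  · have hklam : 1 < (k:ℝ) := by exact_mod_cast hk2
    have hk0 : (0:ℝ) < 1 / (k:ℝ) := by positivity
    obtain ⟨w, hw1, hw2⟩ := hS1 (1 - 1 / (k:ℝ)) (by linarith)
    obtain ⟨A, B, hA, heq⟩ := keyLemma hF hG hnd ha hconv hklam ⟨w, hw1, hw2⟩
    refine ⟨1 / A, -B / A, by positivity, fun x => ?_⟩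
    have h2 := heq (1 / A * x + -B / A)
    have h3 : A * (1 / A * x + -B / A) + B = x := by field_simp; ring
    rw [h3] at h2
    rw [← h2]
    simp only [freePow]
    congr 1
    ring
lemma maxStable_to_domAttr {G : ℝ → ℝ} (h : FreelyMaxStable G) : FreeDomAttr G G := by
  choose! a b hab using h
  refine ⟨fun n => if 1 ≤ n then a n else 1, fun n => if 1 ≤ n then b n else 0, ?_, ?_⟩
  · intro n
    by_cases hn : 1 ≤ n
    · simp only [if_pos hn]; exact (hab n hn).1
    · simp only [if_neg hn]; exact one_pos
  · intro x hx
    refine tendsto_const_nhds.congr' ?_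
    filter_upwards [eventually_ge_atTop 1] with n hn
    simp only [if_pos hn]
    exact ((hab n hn).2 x).symm

theorem freelyMaxStable_iff_domAttr (G : ℝ → ℝ) (hG : IsDistFun G)
    (hnd : ∃ x, 0 < G x ∧ G x < 1) :
    (FreelyMaxStable G ↔ ∃ F : ℝ → ℝ, IsDistFun F ∧ FreeDomAttr F G) ∧
    (FreelyMaxStable G ↔ FreeDomAttr G G) := by
  constructor
  · exact ⟨fun h => ⟨G, hG, maxStable_to_domAttr h⟩, domAttr_to_maxStable hG hnd⟩
  · exact ⟨maxStable_to_domAttr, fun h => domAttr_to_maxStable hG hnd ⟨G, hG, h⟩⟩
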